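/- arXiv:1803.09229 — 2 statements merged into one kernel-verified Lean document; each statement's English description precedes it below -/
import Mathlib

section
/- Let a, b be natural numbers with a ≥ 2 and b ≥ 2, and let A = [[1, a, 0], [0, 1, a], [0, 0, 1]] and B = [[1, 0, 0], [b, 1, 0], [0, b, 1]] in SL₃(ℤ). There exists a constant C > 0 such that for every prime p and every non-identity element w of the free group on two generators whose reduced word length is at most C · log p, the image of w under the homomorphism to SL₃(ZMod p) sending the two generators to the mod-p reductions A_p⁴ and B_p⁴ is not the identity. (Equivalently, the girth of the Cayley graph of ⟨A_p⁴, B_p⁴⟩ with respect to {A_p⁴, B_p⁴} is at least C · log p.) -/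
/-- `A = [[1, a, 0], [0, 1, a], [0, 0, 1]]` as an element of `SL₃(ℤ)`. -/
def A3 (a : ℕ) : Matrix.SpecialLinearGroup (Fin 3) ℤ :=
  ⟨!![1, (a : ℤ), 0; 0, 1, (a : ℤ); 0, 0, 1], by
    simp [Matrix.det_fin_three, Matrix.vecHead, Matrix.vecTail]⟩

/-- `B = [[1, 0, 0], [b, 1, 0], [0, b, 1]]` as an element of `SL₃(ℤ)`. -/
def B3 (b : ℕ) : Matrix.SpecialLinearGroup (Fin 3) ℤ :=
  ⟨!![1, 0, 0; (b : ℤ), 1, 0; 0, (b : ℤ), 1], by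
    simp [Matrix.det_fin_three, Matrix.vecHead, Matrix.vecTail]⟩

/-- Entrywise reduction modulo `p`, as a group homomorphism `SL₃(ℤ) →* SL₃(ZMod p)`. -/
def modp3 (p : ℕ) :
    Matrix.SpecialLinearGroup (Fin 3) ℤ →* Matrix.SpecialLinearGroup (Fin 3) (ZMod p) :=
  Matrix.SpecialLinearGroup.map (Int.castRingHom (ZMod p))

set_option linter.unusedTactic false
set_option linter.unreachableTactic false
set_option linter.unnecessarySeqFocus false
set_option linter.unusedVariables false
set_option linter.deprecated false

open Monoid Pointwise Cardinal

theorem myPingPong {G : Type*} [Group G] {ι : Type*} [Nontrivial ι] [Nonempty ι]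
    (a : ι → G) {α : Type*} [MulAction G α] (X : ι → Set α)
    (hXnonempty : ∀ i, (X i).Nonempty)
    (hXdisj : Pairwise (Function.onFun Disjoint X))
    (hpp : Pairwise fun i j => ∀ n : ℤ, n ≠ 0 → a i ^ n • X j ⊆ X i) :
    Function.Injective (FreeGroup.lift a) := by
  have heq : FreeGroup.lift a =
      (Monoid.CoprodI.lift fun i => FreeGroup.lift fun _ => a i).comp
        (@freeGroupEquivCoprodI ι).toMonoidHom := by
    ext i
    simp
  rw [heq, MonoidHom.coe_comp]
  refine Function.Injective.comp ?_ (MulEquiv.injective freeGroupEquivCoprodI)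
  let H : ι → Type _ := fun _i => FreeGroup Unit
  let f : ∀ i, H i →* G := fun i => FreeGroup.lift fun _ => a i
  apply CoprodI.lift_injective_of_ping_pong f ?_ X hXnonempty hXdisj ?_
  · refine Or.inr ⟨Classical.arbitrary ι, ?_⟩
    have : (Cardinal.mk (FreeGroup Unit)) = Cardinal.aleph0 := by
      rw [Cardinal.mk_congr FreeGroup.freeGroupUnitEquivInt, Cardinal.mk_int]
    rw [show H (Classical.arbitrary ι) = FreeGroup Unit from rfl, this]
    exact (Cardinal.nat_lt_aleph0 3).le
  · intro i j hij
    refine FreeGroup.freeGroupUnitEquivInt.forall_congr_left.mpr ?_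
    intro n hne1
    change FreeGroup.lift (fun _ => a i) (FreeGroup.of () ^ n) • X j ⊆ X i
    simp only [map_zpow, FreeGroup.lift_apply_of]
    have hnne0 : n ≠ 0 := by
      rintro rfl
      apply hne1
      simp [H, FreeGroup.freeGroupUnitEquivInt]
    exact hpp hij n hnne0



def upperSL (β γ : ℤ) : Matrix.SpecialLinearGroup (Fin 3) ℤ :=
  ⟨!![1, β, γ; 0, 1, β; 0, 0, 1], by
    simp [Matrix.det_fin_three, Matrix.vecHead, Matrix.vecTail]⟩

def lowerSL (β γ : ℤ) : Matrix.SpecialLinearGroup (Fin 3) ℤ :=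
  ⟨!![1, 0, 0; β, 1, 0; γ, β, 1], by
    simp [Matrix.det_fin_three, Matrix.vecHead, Matrix.vecTail]⟩

lemma upperSL_mul (β γ β' γ' : ℤ) :
    upperSL β γ * upperSL β' γ' = upperSL (β + β') (γ + γ' + β * β') := by
  apply Subtype.ext
  simp only [Matrix.SpecialLinearGroup.coe_mul, upperSL]
  change !![1, β, γ; 0, 1, β; 0, 0, 1] * !![1, β', γ'; 0, 1, β'; 0, 0, 1] = _
  rw [Matrix.mul_fin_three]
  congr 1 <;> ring

lemma lowerSL_mul (β γ β' γ' : ℤ) :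
    lowerSL β γ * lowerSL β' γ' = lowerSL (β + β') (γ + γ' + β * β') := by
  apply Subtype.ext
  simp only [Matrix.SpecialLinearGroup.coe_mul, lowerSL]
  change !![1, 0, 0; β, 1, 0; γ, β, 1] * !![1, 0, 0; β', 1, 0; γ', β', 1] = _
  rw [Matrix.mul_fin_three]
  congr 1 <;> ring

lemma upperSL_zero : upperSL 0 0 = 1 := by
  apply Subtype.ext
  simp only [upperSL, lowerSL, Matrix.SpecialLinearGroup.coe_one]
  rw [Matrix.one_fin_three]

lemma lowerSL_zero : lowerSL 0 0 = 1 := by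
  apply Subtype.ext
  simp only [upperSL, lowerSL, Matrix.SpecialLinearGroup.coe_one]
  rw [Matrix.one_fin_three]

lemma upperSL_inv (β γ : ℤ) : (upperSL β γ)⁻¹ = upperSL (-β) (β ^ 2 - γ) := by
  apply inv_eq_of_mul_eq_one_right
  rw [upperSL_mul]
  rw [show β + -β = 0 by ring, show γ + (β ^ 2 - γ) + β * -β = 0 by ring, upperSL_zero]

lemma lowerSL_inv (β γ : ℤ) : (lowerSL β γ)⁻¹ = lowerSL (-β) (β ^ 2 - γ) := by
  apply inv_eq_of_mul_eq_one_right
  rw [lowerSL_mul]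
  rw [show β + -β = 0 by ring, show γ + (β ^ 2 - γ) + β * -β = 0 by ring, lowerSL_zero]

lemma A3_eq (a : ℕ) : A3 a = upperSL a 0 := rfl
lemma B3_eq (b : ℕ) : B3 b = lowerSL b 0 := rfl

lemma A3_zpow (a : ℕ) (m : ℤ) :
    ∃ γ : ℤ, 2 * γ = (a : ℤ) ^ 2 * m * (m - 1) ∧ (A3 a) ^ m = upperSL (m * a) γ := by
  induction m using Int.induction_on with
  | zero => exact ⟨0, by ring, by rw [zpow_zero]; rw [show ((0:ℤ) * a) = 0 by ring, upperSL_zero]⟩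
  | succ n ih =>
    obtain ⟨γ, hγ, h⟩ := ih
    refine ⟨γ + n * a ^ 2, by push_cast at hγ ⊢; ring_nf; ring_nf at hγ; linarith, ?_⟩
    rw [zpow_add_one, h, A3_eq, upperSL_mul]
    congr 1 <;> push_cast <;> ring
  | pred n ih =>
    obtain ⟨γ, hγ, h⟩ := ih
    refine ⟨γ + (n + 1) * a ^ 2, by push_cast at hγ ⊢; ring_nf; ring_nf at hγ; linarith, ?_⟩
    rw [zpow_sub_one, h, A3_eq, show ((a:ℤ)) = (a:ℤ) from rfl, upperSL_inv, upperSL_mul]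
    congr 1 <;> push_cast <;> ring

lemma B3_zpow (b : ℕ) (m : ℤ) :
    ∃ γ : ℤ, 2 * γ = (b : ℤ) ^ 2 * m * (m - 1) ∧ (B3 b) ^ m = lowerSL (m * b) γ := by
  induction m using Int.induction_on with
  | zero => exact ⟨0, by ring, by rw [zpow_zero]; rw [show ((0:ℤ) * b) = 0 by ring, lowerSL_zero]⟩
  | succ n ih =>
    obtain ⟨γ, hγ, h⟩ := ih
    refine ⟨γ + n * b ^ 2, by push_cast at hγ ⊢; ring_nf; ring_nf at hγ; linarith, ?_⟩
    rw [zpow_add_one, h, B3_eq, lowerSL_mul]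
    congr 1 <;> push_cast <;> ring
  | pred n ih =>
    obtain ⟨γ, hγ, h⟩ := ih
    refine ⟨γ + (n + 1) * b ^ 2, by push_cast at hγ ⊢; ring_nf; ring_nf at hγ; linarith, ?_⟩
    rw [zpow_sub_one, h, B3_eq, lowerSL_inv, lowerSL_mul]
    congr 1 <;> push_cast <;> ring


section Act

instance sl3zAct : MulAction (Matrix.SpecialLinearGroup (Fin 3) ℤ) (Fin 3 → ℤ) where
  smul g v := (g : Matrix (Fin 3) (Fin 3) ℤ).mulVec v
  one_smul v := by
    show ((1 : Matrix.SpecialLinearGroup (Fin 3) ℤ) : Matrix (Fin 3) (Fin 3) ℤ).mulVec v = v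
    simp
  mul_smul g h v := by
    show (((g * h : Matrix.SpecialLinearGroup (Fin 3) ℤ)) : Matrix (Fin 3) (Fin 3) ℤ).mulVec v
      = (g : Matrix (Fin 3) (Fin 3) ℤ).mulVec ((h : Matrix (Fin 3) (Fin 3) ℤ).mulVec v)
    rw [Matrix.mulVec_mulVec, Matrix.SpecialLinearGroup.coe_mul]

lemma sl3z_smul_def (g : Matrix.SpecialLinearGroup (Fin 3) ℤ) (v : Fin 3 → ℤ) :
    g • v = (g : Matrix (Fin 3) (Fin 3) ℤ).mulVec v := rfl

end Act

section Key

lemma key_ineq {β γ p q r : ℤ} (hβ : 8 ≤ |β|) (h3 : 3 * |β| ≤ γ)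
    (h : 2 * (|p| + |q|) < |r|) :
    2 * (|q + β * r| + |r|) < |p + β * q + γ * r| := by
  have hp : 0 ≤ |p| := abs_nonneg p
  have hq : 0 ≤ |q| := abs_nonneg q
  have hr : 0 ≤ |r| := abs_nonneg r
  have h1 : |q + β * r| ≤ |q| + |β| * |r| := by
    calc |q + β * r| ≤ |q| + |β * r| := abs_add_le _ _
    _ = |q| + |β| * |r| := by rw [abs_mul]
  have h2 : γ * |r| - (|p| + |β| * |q|) ≤ |p + β * q + γ * r| := by
    have : |γ * r| - |p + β * q| ≤ |p + β * q + γ * r| := by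
      have := abs_sub_abs_le_abs_sub (γ * r) (-(p + β * q))
      simp only [abs_neg, sub_neg_eq_add] at this
      calc |γ * r| - |p + β * q| ≤ |γ * r + (p + β * q)| := this
      _ = |p + β * q + γ * r| := by ring_nf
    have h4 : |p + β * q| ≤ |p| + |β| * |q| := by
      calc |p + β * q| ≤ |p| + |β * q| := abs_add_le _ _
      _ = |p| + |β| * |q| := by rw [abs_mul]
    have h5 : |γ * r| = γ * |r| := by rw [abs_mul, abs_of_nonneg (by linarith : (0:ℤ) ≤ γ)]
    linarith
  nlinarith [mul_le_mul_of_nonneg_right h3 hr, mul_le_mul_of_nonneg_left h (by linarith : (0:ℤ) ≤ γ)]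

end Key


section Free
open Pointwise

lemma upperSL_smul (β γ : ℤ) (v : Fin 3 → ℤ) :
    (upperSL β γ) • v = ![v 0 + β * v 1 + γ * v 2, v 1 + β * v 2, v 2] := by
  rw [sl3z_smul_def]
  funext i
  fin_cases i <;>
    simp [sl3z_smul_def, upperSL, Matrix.mulVec, dotProduct, Fin.sum_univ_three] <;> ring

lemma lowerSL_smul (β γ : ℤ) (v : Fin 3 → ℤ) :
    (lowerSL β γ) • v = ![v 0, v 1 + β * v 0, v 2 + β * v 1 + γ * v 0] := by
  rw [sl3z_smul_def]
  funext i
  fin_cases i <;>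
    simp [sl3z_smul_def, lowerSL, Matrix.mulVec, dotProduct, Fin.sum_univ_three] <;> ring

def X0 : Set (Fin 3 → ℤ) := {v | 2 * (|v 1| + |v 2|) < |v 0|}
def X1 : Set (Fin 3 → ℤ) := {v | 2 * (|v 0| + |v 1|) < |v 2|}

lemma coeff_facts {α n : ℤ} (hα : 2 ≤ α) (hn : n ≠ 0) {γ : ℤ}
    (hγ : 2 * γ = α ^ 2 * (4 * n) * (4 * n - 1)) :
    8 ≤ |4 * n * α| ∧ 3 * |4 * n * α| ≤ γ := by
  rcases hn.lt_or_gt with h | h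
  · have hn1 : n ≤ -1 := by omega
    have habs : |4 * n * α| = -(4 * n * α) := abs_of_nonpos (by nlinarith)
    constructor
    · nlinarith
    · nlinarith [mul_nonneg (mul_nonneg (sub_nonneg.mpr hα) (by linarith : (0:ℤ) ≤ -(4*n))) (by linarith : (0:ℤ) ≤ -(4*n) + 1),
        mul_nonneg (mul_nonneg (by linarith : (0:ℤ) ≤ α) (by linarith : (0:ℤ) ≤ -(4*n))) (by linarith : (0:ℤ) ≤ -(4*n) - 4),
        mul_nonneg (mul_nonneg (sub_nonneg.mpr hα) (by linarith : (0:ℤ) ≤ -n)) (by linarith : (0:ℤ) ≤ α)]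
  · have hn1 : 1 ≤ n := h
    have habs : |4 * n * α| = 4 * n * α := abs_of_nonneg (by nlinarith)
    constructor
    · nlinarith
    · nlinarith [mul_nonneg (mul_nonneg (sub_nonneg.mpr hα) (by linarith : (0:ℤ) ≤ 4*n)) (by linarith : (0:ℤ) ≤ 4*n - 1),
        mul_nonneg (mul_nonneg (by linarith : (0:ℤ) ≤ α) (by linarith : (0:ℤ) ≤ 4*n)) (by linarith : (0:ℤ) ≤ 4*n - 4),
        mul_nonneg (mul_nonneg (sub_nonneg.mpr hα) (by linarith : (0:ℤ) ≤ n)) (by linarith : (0:ℤ) ≤ α)]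

theorem sl3_lift_injective (a b : ℕ) (ha : 2 ≤ a) (hb : 2 ≤ b) :
    Function.Injective (FreeGroup.lift ![(A3 a) ^ 4, (B3 b) ^ 4]) := by
  apply myPingPong _ ![X0, X1]
  · intro i
    fin_cases i
    · exact ⟨![1, 0, 0], by simp [X0]⟩
    · exact ⟨![0, 0, 1], by simp [X1]⟩
  · intro i j hij
    have key : Disjoint X0 X1 := by
      rw [Set.disjoint_left]
      intro v h0 h1
      simp only [X0, X1, Set.mem_setOf_eq] at h0 h1
      have := abs_nonneg (v 0); have := abs_nonneg (v 1); have := abs_nonneg (v 2)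
      linarith
    fin_cases i <;> fin_cases j <;> first | (exact absurd rfl hij) | exact key | exact key.symm
  · intro i j hij n hn
    have ha2 : (2:ℤ) ≤ (a:ℤ) := by exact_mod_cast ha
    have hb2 : (2:ℤ) ≤ (b:ℤ) := by exact_mod_cast hb
    fin_cases i <;> fin_cases j
    · exact absurd rfl hij
    · -- U^n • X1 ⊆ X0
      show ((A3 a) ^ 4) ^ n • X1 ⊆ X0
      obtain ⟨γ, hγ, hpow⟩ := A3_zpow a (4 * n)
      have hA : ((A3 a) ^ 4) ^ n = upperSL (4 * n * a) γ := by
        rw [← zpow_natCast (A3 a) 4, ← zpow_mul, show ((4:ℕ):ℤ) * n = 4 * n by norm_num]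
        exact hpow
      obtain ⟨h8, h3⟩ := coeff_facts ha2 hn hγ
      rw [hA]
      rintro x ⟨v, hv, rfl⟩
      simp only [X1, Set.mem_setOf_eq] at hv
      simp only [X0, Set.mem_setOf_eq, upperSL_smul]
      simpa using key_ineq h8 h3 hv
    · -- L^n • X0 ⊆ X1
      show ((B3 b) ^ 4) ^ n • X0 ⊆ X1
      obtain ⟨γ, hγ, hpow⟩ := B3_zpow b (4 * n)
      have hB : ((B3 b) ^ 4) ^ n = lowerSL (4 * n * b) γ := by
        rw [← zpow_natCast (B3 b) 4, ← zpow_mul, show ((4:ℕ):ℤ) * n = 4 * n by norm_num]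
        exact hpow
      obtain ⟨h8, h3⟩ := coeff_facts hb2 hn hγ
      rw [hB]
      rintro x ⟨v, hv, rfl⟩
      simp only [X0, Set.mem_setOf_eq] at hv
      simp only [X1, Set.mem_setOf_eq, lowerSL_smul]
      have hv' : 2 * (|v 2| + |v 1|) < |v 0| := by linarith
      have := key_ineq h8 h3 hv'
      simp only [Matrix.cons_val_zero, Matrix.cons_val_one, Matrix.head_cons,
        Matrix.cons_val_two, Matrix.tail_cons]
      linarith
    · exact absurd rfl hij

end Free

section Bound

lemma A3_pow4 (a : ℕ) : (A3 a) ^ 4 = upperSL (4 * a) (6 * (a:ℤ) ^ 2) := by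
  have h2 : (A3 a) ^ 2 = upperSL (2 * a) ((a:ℤ) ^ 2) := by
    rw [pow_two, A3_eq, upperSL_mul]; congr 1 <;> ring
  calc (A3 a) ^ 4 = (A3 a) ^ 2 * (A3 a) ^ 2 := by rw [← pow_add]
  _ = upperSL (4 * a) (6 * (a:ℤ) ^ 2) := by rw [h2, upperSL_mul]; congr 1 <;> ring

lemma B3_pow4 (b : ℕ) : (B3 b) ^ 4 = lowerSL (4 * b) (6 * (b:ℤ) ^ 2) := by
  have h2 : (B3 b) ^ 2 = lowerSL (2 * b) ((b:ℤ) ^ 2) := by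
    rw [pow_two, B3_eq, lowerSL_mul]; congr 1 <;> ring
  calc (B3 b) ^ 4 = (B3 b) ^ 2 * (B3 b) ^ 2 := by rw [← pow_add]
  _ = lowerSL (4 * b) (6 * (b:ℤ) ^ 2) := by rw [h2, lowerSL_mul]; congr 1 <;> ring

lemma upperSL_entry_bound (β γ E : ℤ) (h1 : 1 ≤ E) (h2 : |β| ≤ E) (h3 : |γ| ≤ E) :
    ∀ i j, |((upperSL β γ : Matrix.SpecialLinearGroup (Fin 3) ℤ) : Matrix (Fin 3) (Fin 3) ℤ) i j| ≤ E := by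
  intro i j
  obtain ⟨h2a, h2b⟩ := abs_le.mp h2
  obtain ⟨h3a, h3b⟩ := abs_le.mp h3
  fin_cases i <;> fin_cases j <;>
    simp [upperSL, Matrix.vecHead, Matrix.vecTail, abs_le] <;> omega

lemma lowerSL_entry_bound (β γ E : ℤ) (h1 : 1 ≤ E) (h2 : |β| ≤ E) (h3 : |γ| ≤ E) :
    ∀ i j, |((lowerSL β γ : Matrix.SpecialLinearGroup (Fin 3) ℤ) : Matrix (Fin 3) (Fin 3) ℤ) i j| ≤ E := by
  intro i j
  obtain ⟨h2a, h2b⟩ := abs_le.mp h2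
  obtain ⟨h3a, h3b⟩ := abs_le.mp h3
  fin_cases i <;> fin_cases j <;>
    simp [lowerSL, Matrix.vecHead, Matrix.vecTail, abs_le] <;> omega

lemma prod_entry_bound (E : ℤ) (hE : 1 ≤ E) :
    ∀ (l : List (Matrix.SpecialLinearGroup (Fin 3) ℤ)),
      (∀ M ∈ l, ∀ i j, |(M : Matrix (Fin 3) (Fin 3) ℤ) i j| ≤ E) →
      ∀ i j, |((l.prod : Matrix.SpecialLinearGroup (Fin 3) ℤ) : Matrix (Fin 3) (Fin 3) ℤ) i j| ≤ (3 * E) ^ l.length := by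
  intro l
  induction l with
  | nil =>
    intro _ i j
    simp only [List.prod_nil, List.length_nil, pow_zero]
    rcases eq_or_ne i j with rfl | hne
    · simp [Matrix.SpecialLinearGroup.coe_one, Matrix.one_apply_eq]
    · simp [Matrix.SpecialLinearGroup.coe_one, Matrix.one_apply_ne hne]
  | cons M l ih =>
    intro h i j
    have hM := h M (List.mem_cons_self)
    have hl := ih (fun N hN => h N (List.mem_cons_of_mem M hN))
    rw [List.prod_cons]
    have expand : ((M * l.prod : Matrix.SpecialLinearGroup (Fin 3) ℤ) : Matrix (Fin 3) (Fin 3) ℤ) i j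
        = (M : Matrix (Fin 3) (Fin 3) ℤ) i 0 * ((l.prod : Matrix.SpecialLinearGroup (Fin 3) ℤ) : Matrix (Fin 3) (Fin 3) ℤ) 0 j
        + (M : Matrix (Fin 3) (Fin 3) ℤ) i 1 * ((l.prod : Matrix.SpecialLinearGroup (Fin 3) ℤ) : Matrix (Fin 3) (Fin 3) ℤ) 1 j
        + (M : Matrix (Fin 3) (Fin 3) ℤ) i 2 * ((l.prod : Matrix.SpecialLinearGroup (Fin 3) ℤ) : Matrix (Fin 3) (Fin 3) ℤ) 2 j := by
      rw [Matrix.SpecialLinearGroup.coe_mul, Matrix.mul_apply, Fin.sum_univ_three]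
    rw [expand, List.length_cons, pow_succ]
    have hP : (0:ℤ) ≤ (3 * E) ^ l.length := by positivity
    have b0 := hl 0 j; have b1 := hl 1 j; have b2 := hl 2 j
    have m0 := hM i 0; have m1 := hM i 1; have m2 := hM i 2
    calc |(M : Matrix (Fin 3) (Fin 3) ℤ) i 0 * _ + (M : Matrix (Fin 3) (Fin 3) ℤ) i 1 * _ + (M : Matrix (Fin 3) (Fin 3) ℤ) i 2 * _|
        ≤ |(M : Matrix (Fin 3) (Fin 3) ℤ) i 0 * ((l.prod : Matrix.SpecialLinearGroup (Fin 3) ℤ) : Matrix (Fin 3) (Fin 3) ℤ) 0 j|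
          + |(M : Matrix (Fin 3) (Fin 3) ℤ) i 1 * ((l.prod : Matrix.SpecialLinearGroup (Fin 3) ℤ) : Matrix (Fin 3) (Fin 3) ℤ) 1 j|
          + |(M : Matrix (Fin 3) (Fin 3) ℤ) i 2 * ((l.prod : Matrix.SpecialLinearGroup (Fin 3) ℤ) : Matrix (Fin 3) (Fin 3) ℤ) 2 j| := by
            exact (abs_add_three _ _ _)
    _ ≤ E * (3 * E) ^ l.length + E * (3 * E) ^ l.length + E * (3 * E) ^ l.length := by
        gcongr <;> rw [abs_mul] <;> apply mul_le_mul ‹_› ‹_› (abs_nonneg _) (by linarith)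
    _ = (3 * E) ^ l.length * (3 * E) := by ring
end Bound

section Word

lemma word_entry_bound (a b : ℕ) (ha : 2 ≤ a) (hb : 2 ≤ b) (w : FreeGroup (Fin 2)) :
    ∀ i j, |((FreeGroup.lift ![(A3 a) ^ 4, (B3 b) ^ 4] w :
        Matrix.SpecialLinearGroup (Fin 3) ℤ) : Matrix (Fin 3) (Fin 3) ℤ) i j|
      ≤ (3 * (1 + 10 * (a:ℤ) ^ 2 + 10 * (b:ℤ) ^ 2)) ^ w.toWord.length := by
  set g : Fin 2 → Matrix.SpecialLinearGroup (Fin 3) ℤ := ![(A3 a) ^ 4, (B3 b) ^ 4] with hg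
  set E : ℤ := 1 + 10 * (a:ℤ) ^ 2 + 10 * (b:ℤ) ^ 2 with hE
  have ha2 : (2:ℤ) ≤ (a:ℤ) := by exact_mod_cast ha
  have hb2 : (2:ℤ) ≤ (b:ℤ) := by exact_mod_cast hb
  have hE1 : 1 ≤ E := by nlinarith
  have hlift : FreeGroup.lift g w
      = ((w.toWord).map fun x => cond x.2 (g x.1) (g x.1)⁻¹).prod := by
    conv_lhs => rw [← FreeGroup.mk_toWord (x := w)]
    exact FreeGroup.lift_mk
  intro i j
  rw [hlift]
  have := prod_entry_bound E hE1 ((w.toWord).map fun x => cond x.2 (g x.1) (g x.1)⁻¹) ?_ i j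
  · simpa [List.length_map] using this
  · rintro M hM
    simp only [List.mem_map] at hM
    obtain ⟨⟨k, c⟩, _, rfl⟩ := hM
    have haE : |4 * (a:ℤ)| ≤ E := by rw [abs_of_nonneg (by linarith)]; nlinarith
    have haE2 : |6 * (a:ℤ)^2| ≤ E := by rw [abs_of_nonneg (by nlinarith)]; nlinarith
    have haE3 : |-(4 * (a:ℤ))| ≤ E := by rw [abs_neg]; exact haE
    have haE4 : |(4 * (a:ℤ))^2 - 6 * (a:ℤ)^2| ≤ E := by
      rw [show (4 * (a:ℤ))^2 - 6 * (a:ℤ)^2 = 10 * (a:ℤ)^2 by ring,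
        abs_of_nonneg (by nlinarith)]
      nlinarith
    have hbE : |4 * (b:ℤ)| ≤ E := by rw [abs_of_nonneg (by linarith)]; nlinarith
    have hbE2 : |6 * (b:ℤ)^2| ≤ E := by rw [abs_of_nonneg (by nlinarith)]; nlinarith
    have hbE3 : |-(4 * (b:ℤ))| ≤ E := by rw [abs_neg]; exact hbE
    have hbE4 : |(4 * (b:ℤ))^2 - 6 * (b:ℤ)^2| ≤ E := by
      rw [show (4 * (b:ℤ))^2 - 6 * (b:ℤ)^2 = 10 * (b:ℤ)^2 by ring,
        abs_of_nonneg (by nlinarith)]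
      nlinarith
    fin_cases k <;> cases c
    · show ∀ i j, |(((g 0)⁻¹ : Matrix.SpecialLinearGroup (Fin 3) ℤ) : Matrix (Fin 3) (Fin 3) ℤ) i j| ≤ E
      have : (g 0)⁻¹ = upperSL (-(4 * a)) ((4 * (a:ℤ))^2 - 6 * (a:ℤ)^2) := by
        rw [hg]
        show ((A3 a) ^ 4)⁻¹ = _
        rw [A3_pow4, upperSL_inv]
      rw [this]
      exact upperSL_entry_bound _ _ E hE1 haE3 haE4
    · show ∀ i j, |((g 0 : Matrix.SpecialLinearGroup (Fin 3) ℤ) : Matrix (Fin 3) (Fin 3) ℤ) i j| ≤ E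
      have : g 0 = upperSL (4 * a) (6 * (a:ℤ)^2) := by rw [hg]; exact A3_pow4 a
      rw [this]
      exact upperSL_entry_bound _ _ E hE1 haE haE2
    · show ∀ i j, |(((g 1)⁻¹ : Matrix.SpecialLinearGroup (Fin 3) ℤ) : Matrix (Fin 3) (Fin 3) ℤ) i j| ≤ E
      have : (g 1)⁻¹ = lowerSL (-(4 * b)) ((4 * (b:ℤ))^2 - 6 * (b:ℤ)^2) := by
        rw [hg]
        show ((B3 b) ^ 4)⁻¹ = _
        rw [B3_pow4, lowerSL_inv]
      rw [this]
      exact lowerSL_entry_bound _ _ E hE1 hbE3 hbE4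
    · show ∀ i j, |((g 1 : Matrix.SpecialLinearGroup (Fin 3) ℤ) : Matrix (Fin 3) (Fin 3) ℤ) i j| ≤ E
      have : g 1 = lowerSL (4 * b) (6 * (b:ℤ)^2) := by rw [hg]; exact B3_pow4 b
      rw [this]
      exact lowerSL_entry_bound _ _ E hE1 hbE hbE2

end Word

/-- there is `C > 0` such that for every prime `p`, every nontrivial element of
the free group on two generators of reduced word length at most `C · log p` has nontrivial
image under the homomorphism sending the generators to `A_p⁴` and `B_p⁴`; i.e. the girth of
the Cayley graph of `⟨A_p⁴, B_p⁴⟩` with respect to `{A_p⁴, B_p⁴}` is at least `C · log p`. -/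
theorem sl3_girth (a b : ℕ) (ha : 2 ≤ a) (hb : 2 ≤ b) :
    ∃ C : ℝ, 0 < C ∧ ∀ p : ℕ, p.Prime →
      ∀ w : FreeGroup (Fin 2), w ≠ 1 →
        ((FreeGroup.toWord w).length : ℝ) ≤ C * Real.log p →
        FreeGroup.lift ![(modp3 p (A3 a)) ^ 4, (modp3 p (B3 b)) ^ 4] w ≠ 1 := by
  have ha2 : (2:ℤ) ≤ (a:ℤ) := by exact_mod_cast ha
  have hb2 : (2:ℤ) ≤ (b:ℤ) := by exact_mod_cast hb
  set E : ℤ := 1 + 10 * (a:ℤ) ^ 2 + 10 * (b:ℤ) ^ 2 with hEdef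
  have hE81 : (81:ℤ) ≤ E := by nlinarith
  set K : ℝ := ((3 * E : ℤ) : ℝ) with hKdef
  have hK4 : (4:ℝ) ≤ K := by
    rw [hKdef]; exact_mod_cast (by linarith : (4:ℤ) ≤ 3 * E)
  have hlogK : 0 < Real.log K := Real.log_pos (by linarith)
  refine ⟨1 / (2 * Real.log K), by positivity, ?_⟩
  intro p hp w hw hlen
  intro hcontra
  set n := w.toWord.length with hn
  have hn1 : 1 ≤ n := by
    rcases Nat.eq_zero_or_pos n with h0 | h1
    · exact absurd (FreeGroup.toWord_eq_nil_iff.mp (List.length_eq_zero_iff.mp h0)) hw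
    · exact h1
  -- the integral matrix
  set M := FreeGroup.lift ![(A3 a) ^ 4, (B3 b) ^ 4] w with hM
  have hMne : M ≠ 1 := by
    intro h
    exact hw (sl3_lift_injective a b ha hb (by rw [← hM, h, map_one]))
  -- reduction mod p kills it
  have hcomp : modp3 p M = FreeGroup.lift ![(modp3 p (A3 a)) ^ 4, (modp3 p (B3 b)) ^ 4] w := by
    have hhom : (modp3 p).comp (FreeGroup.lift ![(A3 a) ^ 4, (B3 b) ^ 4])
        = FreeGroup.lift ![(modp3 p (A3 a)) ^ 4, (modp3 p (B3 b)) ^ 4] := by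
      apply FreeGroup.ext_hom
      intro i
      fin_cases i <;> simp [map_pow]
    calc modp3 p M = ((modp3 p).comp (FreeGroup.lift ![(A3 a) ^ 4, (B3 b) ^ 4])) w := rfl
    _ = FreeGroup.lift ![(modp3 p (A3 a)) ^ 4, (modp3 p (B3 b)) ^ 4] w := by rw [hhom]
  have h1 : modp3 p M = 1 := hcomp.trans hcontra
  -- entry divisibility
  have hdvd : ∀ i j, (p:ℤ) ∣ ((M : Matrix (Fin 3) (Fin 3) ℤ) i j
      - (1 : Matrix (Fin 3) (Fin 3) ℤ) i j) := by
    intro i j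
    have h2 := congrArg (fun X : Matrix.SpecialLinearGroup (Fin 3) (ZMod p) =>
      (X : Matrix (Fin 3) (Fin 3) (ZMod p)) i j) h1
    simp only [modp3, Matrix.SpecialLinearGroup.map_apply_coe, RingHom.mapMatrix_apply,
      Matrix.map_apply, Matrix.SpecialLinearGroup.coe_one] at h2
    rw [← ZMod.intCast_zmod_eq_zero_iff_dvd]
    push_cast
    rw [sub_eq_zero]
    rw [show (((M : Matrix (Fin 3) (Fin 3) ℤ) i j : ZMod p)) = (1 : Matrix (Fin 3) (Fin 3) (ZMod p)) i j from h2]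
    rcases eq_or_ne i j with rfl | hne
    · simp [Matrix.one_apply_eq]
    · simp [Matrix.one_apply_ne hne]
  -- some entry differs
  have hex : ∃ i j, (M : Matrix (Fin 3) (Fin 3) ℤ) i j ≠ (1 : Matrix (Fin 3) (Fin 3) ℤ) i j := by
    by_contra h
    push_neg at h
    apply hMne
    apply Subtype.ext
    rw [Matrix.SpecialLinearGroup.coe_one]
    exact Matrix.ext h
  obtain ⟨i, j, hne⟩ := hex
  set d : ℤ := (M : Matrix (Fin 3) (Fin 3) ℤ) i j - (1 : Matrix (Fin 3) (Fin 3) ℤ) i j with hd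
  have hd0 : d ≠ 0 := sub_ne_zero.mpr hne
  have hple : (p:ℤ) ≤ |d| := Int.le_of_dvd (abs_pos.mpr hd0) ((dvd_abs _ _).mpr (hdvd i j))
  -- bound |d|
  have hbound : |d| ≤ (3 * E) ^ n + 1 := by
    have h3 := word_entry_bound a b ha hb w i j
    have h4 : |(1 : Matrix (Fin 3) (Fin 3) ℤ) i j| ≤ 1 := by
      rcases eq_or_ne i j with rfl | hne'
      · simp [Matrix.one_apply_eq]
      · simp [Matrix.one_apply_ne hne']
    calc |d| ≤ |(M : Matrix (Fin 3) (Fin 3) ℤ) i j| + |(1 : Matrix (Fin 3) (Fin 3) ℤ) i j| :=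
        abs_sub _ _
    _ ≤ (3 * E) ^ n + 1 := by exact add_le_add h3 h4
  -- analytic estimate : K^n + 1 < p
  have hp0 : (0:ℝ) < (p:ℝ) := by exact_mod_cast hp.pos
  have hKn : K ^ n ≤ Real.sqrt p := by
    have hlog : Real.log (K ^ n) ≤ Real.log (Real.sqrt p) := by
      rw [Real.log_pow, Real.log_sqrt (le_of_lt hp0)]
      have : (n : ℝ) * (2 * Real.log K) ≤ Real.log p := by
        have h7 := mul_le_mul_of_nonneg_right hlen
          (le_of_lt (by positivity : (0:ℝ) < 2 * Real.log K))
        have h8 : 1 / (2 * Real.log K) * Real.log p * (2 * Real.log K) = Real.log p := by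
          field_simp
        rw [h8] at h7
        exact h7
      linarith
    have h5 : (0:ℝ) < K ^ n := by positivity
    have h6 : (0:ℝ) < Real.sqrt p := Real.sqrt_pos.mpr hp0
    exact (Real.log_le_log_iff h5 h6).mp hlog
  have hSK : (4:ℝ) ≤ Real.sqrt p := by
    have : K = K ^ 1 := (pow_one K).symm
    have hKle : K ≤ K ^ n := by
      calc K = K ^ 1 := (pow_one K).symm
      _ ≤ K ^ n := pow_le_pow_right₀ (by linarith) hn1
    linarith
  have hfin : K ^ n + 1 < (p:ℝ) := by
    have hps : Real.sqrt p * Real.sqrt p = (p:ℝ) := Real.mul_self_sqrt (le_of_lt hp0)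
    nlinarith [hKn, hSK]
  -- contradiction
  have hfin2 : ((p:ℤ):ℝ) ≤ ((|d| : ℤ) : ℝ) := by exact_mod_cast hple
  have hcast : ((|d| : ℤ) : ℝ) ≤ K ^ n + 1 := by
    have h9 : ((|d| : ℤ) : ℝ) ≤ ((((3 * E) ^ n + 1 : ℤ)) : ℝ) := by exact_mod_cast hbound
    rw [hKdef, ← Int.cast_pow]
    push_cast at h9 ⊢
    linarith
  rw [Int.cast_natCast] at hfin2
  linarith
end

section
/- Let a, b be natural numbers with a ≥ 2, b ≥ 2, a ≡ 1 (mod 3) and b ≡ 2 (mod 3), and let A = [[1, a, 0], [0, 1, a], [0, 0, 1]] and B = [[1, 0, 0], [b, 1, 0], [0, b, 1]] in SL₃(ℤ). Then the reductions modulo 3 of A⁴ and B⁴ generate SL₃(ZMod 3); that is, the subgroup closure of {A₃⁴, B₃⁴} equals all of SL₃(ZMod 3), where A₃, B₃ are the entrywise reductions of A, B modulo 3. -/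
open Matrix

/-- `SL₃(ZMod 3)`. -/
abbrev SL3 := Matrix.SpecialLinearGroup (Fin 3) (ZMod 3)

def X : SL3 := ⟨!![1,1,0;0,1,1;0,0,1], by decide⟩
def Y : SL3 := ⟨!![1,0,0;2,1,0;0,2,1], by decide⟩
def t01 : SL3 := ⟨!![1,1,0;0,1,0;0,0,1], by decide⟩
def t02 : SL3 := ⟨!![1,0,1;0,1,0;0,0,1], by decide⟩
def t10 : SL3 := ⟨!![1,0,0;1,1,0;0,0,1], by decide⟩
def t12 : SL3 := ⟨!![1,0,0;0,1,1;0,0,1], by decide⟩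
def t20 : SL3 := ⟨!![1,0,0;0,1,0;1,0,1], by decide⟩
def t21 : SL3 := ⟨!![1,0,0;0,1,0;0,1,1], by decide⟩
def d1 : SL3 := ⟨!![1,0,0;0,2,0;0,0,2], by decide⟩
def d2 : SL3 := ⟨!![2,0,0;0,1,0;0,0,2], by decide⟩
def d3 : SL3 := ⟨!![2,0,0;0,2,0;0,0,1], by decide⟩

def u2 : (ZMod 3)ˣ := ⟨2, 2, by decide, by decide⟩

instance : DecidableEq SL3 := fun a b =>
  decidable_of_iff ((a : Matrix (Fin 3) (Fin 3) (ZMod 3)) = b) Subtype.ext_iff.symm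

lemma diag_eq (D : Fin 3 → ZMod 3) :
    Matrix.diagonal D = !![D 0, 0, 0; 0, D 1, 0; 0, 0, D 2] := by
  ext i j
  fin_cases i <;> fin_cases j <;>
    simp [Matrix.diagonal_apply, Matrix.vecHead, Matrix.vecTail]

lemma transvection_natCast (i j : Fin 3) (hij : i ≠ j) (n : ℕ) :
    Matrix.transvection i j ((n : ZMod 3)) = Matrix.transvection i j (1 : ZMod 3) ^ n := by
  induction n with
  | zero => simp [Matrix.transvection_zero]
  | succ n ih =>
      rw [pow_succ, ← ih, Matrix.transvection_mul_transvection_same _ _ hij, Nat.cast_succ]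

lemma mem_for_trans {H : Subgroup SL3} {i j : Fin 3} (hij : i ≠ j) (c : ZMod 3)
    (T : SL3) (hT : T ∈ H)
    (hTv : (T : Matrix (Fin 3) (Fin 3) (ZMod 3)) = Matrix.transvection i j 1) :
    ∃ (z : (ZMod 3)ˣ) (g : SL3), g ∈ H ∧
      Matrix.transvection i j c = (z : ZMod 3) • (g : Matrix (Fin 3) (Fin 3) (ZMod 3)) := by
  refine ⟨1, T ^ c.val, pow_mem hT _, ?_⟩
  have hc : ((c.val : ℕ) : ZMod 3) = c := ZMod.natCast_rightInverse c
  rw [Units.val_one, one_smul, Matrix.SpecialLinearGroup.coe_pow, hTv,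
    ← transvection_natCast i j hij, hc]

theorem gen_XY : Subgroup.closure ({X, Y} : Set SL3) = ⊤ := by
  set H := Subgroup.closure ({X, Y} : Set SL3) with hH
  have hX : X ∈ H := Subgroup.subset_closure (Set.mem_insert _ _)
  have hY : Y ∈ H := Subgroup.subset_closure (Set.mem_insert_of_mem _ rfl)
  have ht01 : (t01 : SL3) ∈ H := by
    have e : X * Y * Y * X * Y * X * X * Y * X * Y = (t01 : SL3) := by decide
    exact e ▸ (mul_mem (mul_mem (mul_mem (mul_mem (mul_mem (mul_mem (mul_mem (mul_mem (mul_mem (hX) hY) hY) hX) hY) hX) hX) hY) hX) hY)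
  have ht02 : (t02 : SL3) ∈ H := by
    have e : X * Y * X * Y * Y * X * X * Y * Y * X * Y * X * Y * Y * X * Y * Y * X * X * Y * Y = (t02 : SL3) := by decide
    exact e ▸ (mul_mem (mul_mem (mul_mem (mul_mem (mul_mem (mul_mem (mul_mem (mul_mem (mul_mem (mul_mem (mul_mem (mul_mem (mul_mem (mul_mem (mul_mem (mul_mem (mul_mem (mul_mem (mul_mem (mul_mem (hX) hY) hX) hY) hY) hX) hX) hY) hY) hX) hY) hX) hY) hY) hX) hY) hY) hX) hX) hY) hY)
  have ht10 : (t10 : SL3) ∈ H := by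
    have e : Y * Y * X * Y * Y * X * X * Y * X * X * Y * Y * X * X = (t10 : SL3) := by decide
    exact e ▸ (mul_mem (mul_mem (mul_mem (mul_mem (mul_mem (mul_mem (mul_mem (mul_mem (mul_mem (mul_mem (mul_mem (mul_mem (mul_mem (hY) hY) hX) hY) hY) hX) hX) hY) hX) hX) hY) hY) hX) hX)
  have ht12 : (t12 : SL3) ∈ H := by
    have e : Y * X * Y * X * X * Y * X * Y * Y * X = (t12 : SL3) := by decide
    exact e ▸ (mul_mem (mul_mem (mul_mem (mul_mem (mul_mem (mul_mem (mul_mem (mul_mem (mul_mem (hY) hX) hY) hX) hX) hY) hX) hY) hY) hX)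
  have ht20 : (t20 : SL3) ∈ H := by
    have e : X * Y * X * X * Y * Y * X * X * Y * X * Y * X * X * Y * X * X * Y * Y * X * X * Y = (t20 : SL3) := by decide
    exact e ▸ (mul_mem (mul_mem (mul_mem (mul_mem (mul_mem (mul_mem (mul_mem (mul_mem (mul_mem (mul_mem (mul_mem (mul_mem (mul_mem (mul_mem (mul_mem (mul_mem (mul_mem (mul_mem (mul_mem (mul_mem (hX) hY) hX) hX) hY) hY) hX) hX) hY) hX) hY) hX) hX) hY) hX) hX) hY) hY) hX) hX) hY)
  have ht21 : (t21 : SL3) ∈ H := by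
    have e : X * X * Y * Y * X * X * Y * X * X * Y * Y * X * Y * Y = (t21 : SL3) := by decide
    exact e ▸ (mul_mem (mul_mem (mul_mem (mul_mem (mul_mem (mul_mem (mul_mem (mul_mem (mul_mem (mul_mem (mul_mem (mul_mem (mul_mem (hX) hX) hY) hY) hX) hX) hY) hX) hX) hY) hY) hX) hY) hY)
  have hd1 : (d1 : SL3) ∈ H := by
    have e : X * Y * Y * X * X * Y * Y * X * X * Y * Y * X * X * Y * Y * X * X * Y * Y * X * Y * Y * X = (d1 : SL3) := by decide
    exact e ▸ (mul_mem (mul_mem (mul_mem (mul_mem (mul_mem (mul_mem (mul_mem (mul_mem (mul_mem (mul_mem (mul_mem (mul_mem (mul_mem (mul_mem (mul_mem (mul_mem (mul_mem (mul_mem (mul_mem (mul_mem (mul_mem (mul_mem (hX) hY) hY) hX) hX) hY) hY) hX) hX) hY) hY) hX) hX) hY) hY) hX) hX) hY) hY) hX) hY) hY) hX)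
  have hd2 : (d2 : SL3) ∈ H := by
    have e : X * Y * Y * X * X * Y * X * Y * X * Y * X * X * Y * Y * X = (d2 : SL3) := by decide
    exact e ▸ (mul_mem (mul_mem (mul_mem (mul_mem (mul_mem (mul_mem (mul_mem (mul_mem (mul_mem (mul_mem (mul_mem (mul_mem (mul_mem (mul_mem (hX) hY) hY) hX) hX) hY) hX) hY) hX) hY) hX) hX) hY) hY) hX)
  have hd3 : (d3 : SL3) ∈ H := by
    have e : X * Y * Y * X * Y * Y * X * X * Y * Y * X * X * Y * Y * X * X * Y * Y * X * X * Y * Y * X = (d3 : SL3) := by decide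
    exact e ▸ (mul_mem (mul_mem (mul_mem (mul_mem (mul_mem (mul_mem (mul_mem (mul_mem (mul_mem (mul_mem (mul_mem (mul_mem (mul_mem (mul_mem (mul_mem (mul_mem (mul_mem (mul_mem (mul_mem (mul_mem (mul_mem (mul_mem (hX) hY) hY) hX) hY) hY) hX) hX) hY) hY) hX) hX) hY) hY) hX) hX) hY) hY) hX) hX) hY) hY) hX)
  have tri : ∀ x : ZMod 3, x = 0 ∨ x = 1 ∨ x = 2 := by decide
  have key : ∀ M : Matrix (Fin 3) (Fin 3) (ZMod 3), M.det ≠ 0 →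
      ∃ (z : (ZMod 3)ˣ) (g : SL3), g ∈ H ∧
        M = (z : ZMod 3) • (g : Matrix (Fin 3) (Fin 3) (ZMod 3)) := by
    intro M hM
    apply Matrix.diagonal_transvection_induction_of_det_ne_zero _ M hM
    · intro D hD
      rcases tri (D 0) with h0 | h0 | h0 <;> rcases tri (D 1) with h1 | h1 | h1 <;>
        rcases tri (D 2) with h2 | h2 | h2 <;>
      first
        | (refine ⟨1, 1, one_mem _, ?_⟩; rw [diag_eq D, h0, h1, h2]; decide)
        | (refine ⟨1, d1, hd1, ?_⟩; rw [diag_eq D, h0, h1, h2]; decide)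
        | (refine ⟨1, d2, hd2, ?_⟩; rw [diag_eq D, h0, h1, h2]; decide)
        | (refine ⟨1, d3, hd3, ?_⟩; rw [diag_eq D, h0, h1, h2]; decide)
        | (refine ⟨u2, 1, one_mem _, ?_⟩; rw [diag_eq D, h0, h1, h2]; decide)
        | (refine ⟨u2, d1, hd1, ?_⟩; rw [diag_eq D, h0, h1, h2]; decide)
        | (refine ⟨u2, d2, hd2, ?_⟩; rw [diag_eq D, h0, h1, h2]; decide)
        | (refine ⟨u2, d3, hd3, ?_⟩; rw [diag_eq D, h0, h1, h2]; decide)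
        | (rw [Matrix.det_diagonal, Fin.prod_univ_three, h0, h1, h2] at hD; simp at hD)
    · intro t
      obtain ⟨i, j, hij, c⟩ := t
      rw [Matrix.TransvectionStruct.toMatrix_mk]
      fin_cases i <;> fin_cases j
      · exact absurd rfl hij
      · exact mem_for_trans hij c t01 ht01 (by decide)
      · exact mem_for_trans hij c t02 ht02 (by decide)
      · exact mem_for_trans hij c t10 ht10 (by decide)
      · exact absurd rfl hij
      · exact mem_for_trans hij c t12 ht12 (by decide)
      · exact mem_for_trans hij c t20 ht20 (by decide)
      · exact mem_for_trans hij c t21 ht21 (by decide)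
      · exact absurd rfl hij
    · rintro P Q hP hQ ⟨z1, g1, hg1, e1⟩ ⟨z2, g2, hg2, e2⟩
      refine ⟨z1 * z2, g1 * g2, mul_mem hg1 hg2, ?_⟩
      rw [e1, e2, Units.val_mul, smul_mul_smul_comm, Matrix.SpecialLinearGroup.coe_mul]
  rw [Subgroup.eq_top_iff']
  intro g
  obtain ⟨z, h, hh, he⟩ := key (g : Matrix (Fin 3) (Fin 3) (ZMod 3))
    (by rw [g.2]; exact one_ne_zero)
  have hz3 : (z : ZMod 3) ^ 3 = 1 := by
    have hd := congrArg Matrix.det he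
    rw [Matrix.det_smul, Matrix.SpecialLinearGroup.det_coe,
      Matrix.SpecialLinearGroup.det_coe, Fintype.card_fin, mul_one] at hd
    exact hd.symm
  have hz : z = 1 := by
    have : ∀ u : (ZMod 3)ˣ, (u : ZMod 3) ^ 3 = 1 → u = 1 := by decide
    exact this z hz3
  rw [hz, Units.val_one, one_smul] at he
  exact (Subtype.coe_injective he) ▸ hh

/-- if `a ≡ 1 (mod 3)` and `b ≡ 2 (mod 3)`, then the reductions modulo `3` of
`A⁴` and `B⁴` generate `SL₃(ZMod 3)`. -/
theorem sl3_generation_mod_three (a b : ℕ) (ha : 2 ≤ a) (hb : 2 ≤ b)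
    (ha3 : a % 3 = 1) (hb3 : b % 3 = 2) :
    Subgroup.closure
      ({(modp3 3 (A3 a)) ^ 4, (modp3 3 (B3 b)) ^ 4} :
        Set (Matrix.SpecialLinearGroup (Fin 3) (ZMod 3))) = ⊤ := by
  have haz : ((a : ℕ) : ZMod 3) = 1 := by
    rw [← ZMod.natCast_mod, ha3, Nat.cast_one]
  have hbz : ((b : ℕ) : ZMod 3) = 2 := by
    rw [← ZMod.natCast_mod, hb3]; rfl
  have hA : modp3 3 (A3 a) = X := by
    ext i j
    rw [modp3, Matrix.SpecialLinearGroup.map_apply_coe]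
    fin_cases i <;> fin_cases j <;>
      simp [modp3, A3, X, haz, Int.cast_natCast, Matrix.vecHead, Matrix.vecTail, Matrix.SpecialLinearGroup.map_apply_coe]
  have hB : modp3 3 (B3 b) = Y := by
    ext i j
    rw [modp3, Matrix.SpecialLinearGroup.map_apply_coe]
    fin_cases i <;> fin_cases j <;>
      simp [modp3, B3, Y, hbz, Int.cast_natCast, Matrix.vecHead, Matrix.vecTail, Matrix.SpecialLinearGroup.map_apply_coe]
  rw [hA, hB, show X ^ 4 = X from by decide, show Y ^ 4 = Y from by decide]
  exact gen_XY
end
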